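/- With the stiffness matrix entries z_{i,j} defined via the weighted left and right fractional integrals of the hat-function derivatives, the strictly upper-triangular entries satisfy, for every 1 ≤ i ≤ I−3 and i+2 ≤ j ≤ I−1, z_{i,j} = ( b·(1−γ)·h^{λ−1} / Γ(λ+1) ) · [ ( 2·(j−i+1/2)^λ − (j−i−1/2)^λ − (j−i+3/2)^λ ) − ( 2·(j−i−1/2)^λ − (j−i−3/2)^λ − (j−i+1/2)^λ ) ]; in particular the left fractional integral contributes nothing to these entries. -/

import Mathlib

open MeasureTheory intervalIntegral Real

/-- Left fractional integral operator of order `lam` on `[0,1]`: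
`(I_L^λ f)(x) = (1/Γ(λ)) ∫_0^x (x−s)^{λ−1} f(s) ds`. -/
noncomputable def leftFracInt (lam : ℝ) (f : ℝ → ℝ) (x : ℝ) : ℝ :=
  (1 / Real.Gamma lam) * ∫ s in (0:ℝ)..x, (x - s) ^ (lam - 1) * f s

/-- Right fractional integral operator of order `lam` on `[0,1]`:
`(I_R^λ f)(x) = (1/Γ(λ)) ∫_x^1 (s−x)^{λ−1} f(s) ds`. -/
noncomputable def rightFracInt (lam : ℝ) (f : ℝ → ℝ) (x : ℝ) : ℝ :=
  (1 / Real.Gamma lam) * ∫ s in x..(1:ℝ), (s - x) ^ (lam - 1) * f s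

/-- The a.e. derivative `Dφ_j` of the hat function `φ_j` on a uniform grid with
spacing `h`: it equals `1/h` on `(x_{j-1}, x_j)`, `−1/h` on `(x_j, x_{j+1})`,
and `0` elsewhere, where `x_k = k·h`. -/
noncomputable def hatDeriv (h : ℝ) (j : ℕ) (s : ℝ) : ℝ :=
  if ((j : ℝ) - 1) * h < s ∧ s < (j : ℝ) * h then 1 / h
  else if (j : ℝ) * h < s ∧ s < ((j : ℝ) + 1) * h then -1 / h
  else 0

/-- The stiffness matrix entry
`z_{i,j} = b·[(γ I_L^λ + (1−γ) I_R^λ)(Dφ_j)(x_{i−1/2}) − (γ I_L^λ + (1−γ) I_R^λ)(Dφ_j)(x_{i+1/2})]`,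
where `x_{i±1/2} = (i ± 1/2)·h` are the midpoints of the grid cells. -/
noncomputable def stiff (lam gam b h : ℝ) (i j : ℕ) : ℝ :=
  b * ((gam * leftFracInt lam (hatDeriv h j) (((i : ℝ) - 1 / 2) * h)
          + (1 - gam) * rightFracInt lam (hatDeriv h j) (((i : ℝ) - 1 / 2) * h))
        - (gam * leftFracInt lam (hatDeriv h j) (((i : ℝ) + 1 / 2) * h)
          + (1 - gam) * rightFracInt lam (hatDeriv h j) (((i : ℝ) + 1 / 2) * h)))

lemma seg_int (lam x a b c : ℝ) (hlam : 0 < lam) (hab : a ≤ b) (g : ℝ → ℝ)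
    (hg : ∀ s ∈ Set.Ioo a b, g s = c) :
    IntervalIntegrable (fun s => (s - x) ^ (lam - 1) * g s) volume a b := by
  have hbase : IntervalIntegrable (fun s : ℝ => (s - x) ^ (lam - 1) * c) volume a b := by
    have h1 : IntervalIntegrable (fun u : ℝ => u ^ (lam - 1)) volume (a - x) (b - x) :=
      intervalIntegrable_rpow' (by linarith)
    have h2 := (h1.comp_sub_right x)
    simp only [sub_add_cancel] at h2
    exact h2.mul_const c
  apply hbase.congr_ae
  have hmem : ∀ᵐ s ∂volume.restrict (Set.uIoc a b), s ∈ Set.uIoc a b :=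
    ae_restrict_mem measurableSet_uIoc
  have hne : ∀ᵐ s : ℝ ∂volume.restrict (Set.uIoc a b), s ≠ b :=
    ae_restrict_of_ae (by
      refine ae_iff.2 ?_
      have he : {s : ℝ | ¬ s ≠ b} = {b} := by ext s; simp
      rw [he]; exact Real.volume_singleton)
  filter_upwards [hmem, hne] with s hs hsb
  rw [Set.uIoc_of_le hab] at hs
  have : s ∈ Set.Ioo a b := ⟨hs.1, lt_of_le_of_ne hs.2 hsb⟩
  simp [hg s this]

lemma seg_eq (lam x a b c : ℝ) (hlam : 0 < lam) (hab : a ≤ b) (g : ℝ → ℝ)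
    (hg : ∀ s ∈ Set.Ioo a b, g s = c) :
    ∫ s in a..b, (s - x) ^ (lam - 1) * g s
      = c * (((b - x) ^ lam - (a - x) ^ lam) / lam) := by
  have hcong : ∫ s in a..b, (s - x) ^ (lam - 1) * g s
      = ∫ s in a..b, (s - x) ^ (lam - 1) * c := by
    apply intervalIntegral.integral_congr_ae
    have hne : ∀ᵐ s : ℝ ∂volume, s ≠ b := by
      refine ae_iff.2 ?_
      have he : {s : ℝ | ¬ s ≠ b} = {b} := by ext s; simp
      rw [he]; exact Real.volume_singleton
    filter_upwards [hne] with s hsb hs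
    rw [Set.uIoc_of_le hab] at hs
    rw [hg s ⟨hs.1, lt_of_le_of_ne hs.2 hsb⟩]
  rw [hcong, intervalIntegral.integral_mul_const]
  have : ∫ s in a..b, (s - x) ^ (lam - 1)
      = ∫ u in (a - x)..(b - x), u ^ (lam - 1) :=
    intervalIntegral.integral_comp_sub_right (fun u => u ^ (lam - 1)) x
  rw [this, integral_rpow (Or.inl (by linarith))]
  rw [sub_add_cancel]
  ring

lemma hat_left_zero (h : ℝ) (j : ℕ) (hh : 0 < h) (s : ℝ) (hs : s ≤ ((j:ℝ) - 1) * h) :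
    hatDeriv h j s = 0 := by
  have hexp : ((j:ℝ) - 1) * h = (j:ℝ) * h - h := by ring
  have c1 : ¬(((j:ℝ) - 1) * h < s ∧ s < (j:ℝ) * h) := by rintro ⟨h1, _⟩; linarith
  have c2 : ¬((j:ℝ) * h < s ∧ s < ((j:ℝ) + 1) * h) := by rintro ⟨h1, _⟩; linarith
  simp [hatDeriv, c1, c2]

lemma hat_right_zero (h : ℝ) (j : ℕ) (hh : 0 < h) (s : ℝ) (hs : ((j:ℝ) + 1) * h ≤ s) :
    hatDeriv h j s = 0 := by
  have hexp : ((j:ℝ) + 1) * h = (j:ℝ) * h + h := by ring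
  have c1 : ¬(((j:ℝ) - 1) * h < s ∧ s < (j:ℝ) * h) := by rintro ⟨_, h2⟩; linarith
  have c2 : ¬((j:ℝ) * h < s ∧ s < ((j:ℝ) + 1) * h) := by rintro ⟨_, h2⟩; linarith
  simp [hatDeriv, c1, c2]

lemma left_zero (lam h x : ℝ) (j : ℕ) (hh : 0 < h) (hx0 : 0 ≤ x)
    (hx : x ≤ ((j:ℝ) - 1) * h) :
    ∫ s in (0:ℝ)..x, (x - s) ^ (lam - 1) * hatDeriv h j s = 0 := by
  have hEq : Set.EqOn (fun s => (x - s) ^ (lam - 1) * hatDeriv h j s) 0 (Set.uIcc 0 x) := by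
    intro s hs
    rw [Set.uIcc_of_le hx0] at hs
    have : hatDeriv h j s = 0 := hat_left_zero h j hh s (le_trans hs.2 hx)
    simp [this]
  rw [intervalIntegral.integral_congr hEq]
  simp

lemma right_int_eq (lam h x : ℝ) (j : ℕ) (hlam : 0 < lam) (hh : 0 < h)
    (hx : x ≤ ((j:ℝ) - 1) * h) (hC : ((j:ℝ) + 1) * h ≤ 1) :
    ∫ s in x..1, (s - x) ^ (lam - 1) * hatDeriv h j s
      = (1/h) * ((((j:ℝ) * h - x) ^ lam - (((j:ℝ) - 1) * h - x) ^ lam) / lam)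
        - (1/h) * (((((j:ℝ) + 1) * h - x) ^ lam - ((j:ℝ) * h - x) ^ lam) / lam) := by
  set A := ((j:ℝ) - 1) * h with hA
  set B := (j:ℝ) * h with hB
  set C := ((j:ℝ) + 1) * h with hC'
  have hAB : A ≤ B := by rw [hA, hB]; nlinarith
  have hBC : B ≤ C := by rw [hB, hC']; nlinarith
  have hz1 : ∀ s ∈ Set.Ioo x A, hatDeriv h j s = (0:ℝ) := fun s hs =>
    hat_left_zero h j hh s (le_of_lt hs.2)
  have hz2 : ∀ s ∈ Set.Ioo A B, hatDeriv h j s = 1 / h := by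
    intro s hs
    simp [hatDeriv, if_pos, (show ((j:ℝ) - 1) * h < s from hs.1), (show s < (j:ℝ) * h from hs.2)]
  have hz3 : ∀ s ∈ Set.Ioo B C, hatDeriv h j s = -1 / h := by
    intro s hs
    have c1 : ¬(A < s ∧ s < B) := by rintro ⟨_, h2⟩; exact absurd hs.1 (not_lt.2 (le_of_lt h2))
    simp [hatDeriv, (show ¬(((j:ℝ) - 1) * h < s ∧ s < (j:ℝ) * h) from c1), (show (j:ℝ) * h < s from hs.1), (show s < ((j:ℝ) + 1) * h from hs.2)]
  have hz4 : ∀ s ∈ Set.Ioo C 1, hatDeriv h j s = (0:ℝ) := fun s hs =>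
    hat_right_zero h j hh s (le_of_lt hs.1)
  have i1 := seg_int lam x x A 0 hlam hx _ hz1
  have i2 := seg_int lam x A B (1/h) hlam hAB _ hz2
  have i3 := seg_int lam x B C (-1/h) hlam hBC _ hz3
  have i4 := seg_int lam x C 1 0 hlam hC _ hz4
  have e1 := intervalIntegral.integral_add_adjacent_intervals i1 i2
  have e2 := intervalIntegral.integral_add_adjacent_intervals (i1.trans i2) i3
  have e3 := intervalIntegral.integral_add_adjacent_intervals ((i1.trans i2).trans i3) i4
  rw [← e3, ← e2, ← e1]
  rw [seg_eq lam x x A 0 hlam hx _ hz1, seg_eq lam x A B (1/h) hlam hAB _ hz2,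
    seg_eq lam x B C (-1/h) hlam hBC _ hz3, seg_eq lam x C 1 0 hlam hC _ hz4]
  ring


/-- Strictly upper-triangular entries of the stiffness matrix; in particular
the left fractional integral contributes nothing to these entries. -/
theorem stiffness_upper_triangular
    (lam gam b : ℝ) (hlam0 : 0 < lam) (hlam1 : lam < 1)
    (hgam : gam ∈ Set.Icc (0:ℝ) 1) (hb : 0 < b)
    (I : ℕ) (hI : 4 ≤ I) (h : ℝ) (hh : h = 1 / (I : ℝ))
    (i j : ℕ) (hi1 : 1 ≤ i) (hi2 : i ≤ I - 3) (hj1 : i + 2 ≤ j) (hj2 : j ≤ I - 1) :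
    stiff lam gam b h i j
      = (b * (1 - gam) * h ^ (lam - 1) / Real.Gamma (lam + 1))
        * ((2 * ((j : ℝ) - (i : ℝ) + 1 / 2) ^ lam
              - ((j : ℝ) - (i : ℝ) - 1 / 2) ^ lam
              - ((j : ℝ) - (i : ℝ) + 3 / 2) ^ lam)
          - (2 * ((j : ℝ) - (i : ℝ) - 1 / 2) ^ lam
              - ((j : ℝ) - (i : ℝ) - 3 / 2) ^ lam
              - ((j : ℝ) - (i : ℝ) + 1 / 2) ^ lam)) := by
  have hIpos : (4:ℝ) ≤ (I:ℝ) := by exact_mod_cast hI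
  have hhpos : 0 < h := by rw [hh]; positivity
  have hij : (i:ℝ) + 2 ≤ (j:ℝ) := by exact_mod_cast hj1
  have hi1' : (1:ℝ) ≤ (i:ℝ) := by exact_mod_cast hi1
  have hjI : (j:ℝ) + 1 ≤ (I:ℝ) := by
    have : j + 1 ≤ I := by omega
    exact_mod_cast this
  set x1 := ((i:ℝ) - 1/2) * h with hx1
  set x2 := ((i:ℝ) + 1/2) * h with hx2
  have hx10 : 0 ≤ x1 := by
    rw [hx1]; exact mul_nonneg (by linarith) hhpos.le
  have hx20 : 0 ≤ x2 := by
    rw [hx2]; exact mul_nonneg (by linarith) hhpos.le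
  have hx2A : x2 ≤ ((j:ℝ) - 1) * h := by
    rw [hx2]; exact mul_le_mul_of_nonneg_right (by linarith) hhpos.le
  have hx1A : x1 ≤ ((j:ℝ) - 1) * h := by
    rw [hx1]; exact mul_le_mul_of_nonneg_right (by linarith) hhpos.le
  have hCle : ((j:ℝ) + 1) * h ≤ 1 := by
    have hI0 : (0:ℝ) < (I:ℝ) := by linarith
    rw [hh, mul_one_div, div_le_one hI0]
    exact hjI
  -- left integrals vanish
  have L1 : leftFracInt lam (hatDeriv h j) x1 = 0 := by
    unfold leftFracInt; rw [left_zero lam h x1 j hhpos hx10 hx1A]; ring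
  have L2 : leftFracInt lam (hatDeriv h j) x2 = 0 := by
    unfold leftFracInt; rw [left_zero lam h x2 j hhpos hx20 hx2A]; ring
  -- right integrals
  have R1 : rightFracInt lam (hatDeriv h j) x1
      = (1 / Real.Gamma lam) * ((1/h) * ((((j:ℝ) * h - x1) ^ lam - (((j:ℝ) - 1) * h - x1) ^ lam) / lam)
        - (1/h) * (((((j:ℝ) + 1) * h - x1) ^ lam - ((j:ℝ) * h - x1) ^ lam) / lam)) := by
    unfold rightFracInt; rw [right_int_eq lam h x1 j hlam0 hhpos hx1A hCle]
  have R2 : rightFracInt lam (hatDeriv h j) x2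
      = (1 / Real.Gamma lam) * ((1/h) * ((((j:ℝ) * h - x2) ^ lam - (((j:ℝ) - 1) * h - x2) ^ lam) / lam)
        - (1/h) * (((((j:ℝ) + 1) * h - x2) ^ lam - ((j:ℝ) * h - x2) ^ lam) / lam)) := by
    unfold rightFracInt; rw [right_int_eq lam h x2 j hlam0 hhpos hx2A hCle]
  set d := (j:ℝ) - (i:ℝ) with hd
  have hd2 : 2 ≤ d := by rw [hd]; linarith
  -- rewrite the rpow terms
  have hrw : ∀ c : ℝ, 0 ≤ c → (c * h) ^ lam = c ^ lam * h ^ lam := fun c hc =>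
    Real.mul_rpow hc (le_of_lt hhpos)
  have eB1 : (j:ℝ) * h - x1 = (d + 1/2) * h := by rw [hx1, hd]; ring
  have eA1 : ((j:ℝ) - 1) * h - x1 = (d - 1/2) * h := by rw [hx1, hd]; ring
  have eC1 : ((j:ℝ) + 1) * h - x1 = (d + 3/2) * h := by rw [hx1, hd]; ring
  have eB2 : (j:ℝ) * h - x2 = (d - 1/2) * h := by rw [hx2, hd]; ring
  have eA2 : ((j:ℝ) - 1) * h - x2 = (d - 3/2) * h := by rw [hx2, hd]; ring
  have eC2 : ((j:ℝ) + 1) * h - x2 = (d + 1/2) * h := by rw [hx2, hd]; ring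
  rw [eB1, eA1, eC1] at R1
  rw [eB2, eA2, eC2] at R2
  rw [hrw (d + 1/2) (by linarith), hrw (d - 1/2) (by linarith), hrw (d + 3/2) (by linarith)] at R1
  rw [hrw (d - 1/2) (by linarith), hrw (d - 3/2) (by linarith), hrw (d + 1/2) (by linarith)] at R2
  unfold stiff
  rw [show (((i : ℝ) - 1 / 2) * h) = x1 from hx1.symm, show (((i : ℝ) + 1 / 2) * h) = x2 from hx2.symm]
  rw [L1, L2, R1, R2]
  have hGam : Real.Gamma (lam + 1) = lam * Real.Gamma lam :=
    Real.Gamma_add_one (ne_of_gt hlam0)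
  have hGpos : 0 < Real.Gamma lam := Real.Gamma_pos_of_pos hlam0
  have hpow : h ^ (lam - 1) = h ^ lam / h := by
    rw [Real.rpow_sub hhpos, Real.rpow_one]
  rw [hGam, hpow, hd]
  have hne1 : Real.Gamma lam ≠ 0 := ne_of_gt hGpos
  have hne2 : lam ≠ 0 := ne_of_gt hlam0
  have hne3 : h ≠ 0 := ne_of_gt hhpos
  field_simp
  ring
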